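/- arXiv:2107.06381 — 4 statements merged into one kernel-verified Lean document; each statement's English description precedes it below -/
import Mathlib

section
/- Let T > 0, τ ≥ 0, α > 0, λ ≥ 0 and 0 ≤ t ≤ T + τ. Then e^{-2tλ} / (α(1 + τλ) + e^{-Tλ})^2 ≤ (1/α)^{2(1 - t/(T+τ))}. -/
theorem stmt_2 (T τ α lam t : ℝ) (hT : 0 < T) (hτ : 0 ≤ τ) (hα : 0 < α)
    (hlam : 0 ≤ lam) (ht0 : 0 ≤ t) (ht1 : t ≤ T + τ) :
    Real.exp (-2 * t * lam) / (α * (1 + τ * lam) + Real.exp (-T * lam)) ^ 2 ≤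
      (1 / α) ^ (2 * (1 - t / (T + τ))) := by
  have hTτ : 0 < T + τ := by linarith
  set s : ℝ := t / (T + τ) with hs_def
  have hs0 : 0 ≤ s := div_nonneg ht0 hTτ.le
  have hs1 : s ≤ 1 := by
    rw [div_le_one hTτ]; exact ht1
  set θ : ℝ := 1 - s with hθ_def
  have hθ0 : 0 ≤ θ := by simp [hθ_def]; linarith
  have hθ1 : θ ≤ 1 := by simp [hθ_def]; linarith
  set b : ℝ := Real.exp (-(T + τ) * lam) with hb_def
  have hb : 0 < b := Real.exp_pos _
  -- geometric mean bound
  have hgm : α ^ θ * b ^ (1 - θ) ≤ θ * α + (1 - θ) * b :=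
    Real.geom_mean_le_arith_mean2_weighted hθ0 (by linarith) hα.le hb.le (by ring)
  have h1 : θ * α + (1 - θ) * b ≤ α + b := by nlinarith
  have h2 : α + b ≤ α * (1 + τ * lam) + Real.exp (-T * lam) := by
    have hb' : b ≤ Real.exp (-T * lam) := by
      apply Real.exp_le_exp.2; nlinarith
    nlinarith [mul_nonneg hτ hlam]
  have hbpow : b ^ (1 - θ) = Real.exp (-t * lam) := by
    rw [hb_def, ← Real.exp_one_rpow (-(T + τ) * lam), ← Real.rpow_mul (by positivity)]
    congr 1
    have : (1 : ℝ) - θ = s := by simp [hθ_def]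
    rw [this, hs_def]
    field_simp
    ring_nf
    exact Real.exp_one_rpow _
  set c : ℝ := α ^ θ * Real.exp (-t * lam) with hc_def
  have hc : 0 < c := by positivity
  have hden : c ≤ α * (1 + τ * lam) + Real.exp (-T * lam) := by
    rw [hc_def, ← hbpow]; linarith
  have hsq : c ^ 2 ≤ (α * (1 + τ * lam) + Real.exp (-T * lam)) ^ 2 := by
    apply pow_le_pow_left₀ hc.le hden
  have hmain : Real.exp (-2 * t * lam) / (α * (1 + τ * lam) + Real.exp (-T * lam)) ^ 2
      ≤ Real.exp (-2 * t * lam) / c ^ 2 :=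
    div_le_div_of_nonneg_left (Real.exp_pos _).le (by positivity) hsq
  have hceq : c ^ 2 = α ^ (2 * θ) * Real.exp (-2 * t * lam) := by
    rw [hc_def, mul_pow, ← Real.exp_nat_mul, sq, ← Real.rpow_add hα]
    ring_nf
  have hfin : Real.exp (-2 * t * lam) / c ^ 2 = (1 / α) ^ (2 * (1 - s)) := by
    rw [hceq, one_div, Real.inv_rpow hα.le, hθ_def]
    rw [mul_comm, div_mul_eq_div_div, div_right_comm, div_self (Real.exp_ne_zero _), one_div]
  calc Real.exp (-2 * t * lam) / (α * (1 + τ * lam) + Real.exp (-T * lam)) ^ 2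
      ≤ Real.exp (-2 * t * lam) / c ^ 2 := hmain
    _ = (1 / α) ^ (2 * (1 - s)) := hfin
end

section
/- Let T > 0, τ > 0, α > 0, λ ≥ 0 and 0 ≤ t ≤ T + τ. Then τ² e^{-2tλ} / (α(1 + τλ) + τ e^{-Tλ})² ≤ (τ/α)^{2(1 - t/(T+τ))}. -/
theorem stmt_3 (T τ α lam t : ℝ) (hT : 0 < T) (hτ : 0 < τ) (hα : 0 < α)
    (hlam : 0 ≤ lam) (ht0 : 0 ≤ t) (ht1 : t ≤ T + τ) :
    τ ^ 2 * Real.exp (-2 * t * lam) / (α * (1 + τ * lam) + τ * Real.exp (-T * lam)) ^ 2 ≤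
      (τ / α) ^ (2 * (1 - t / (T + τ))) := by
  have hTτ : (0:ℝ) < T + τ := by linarith
  set θ : ℝ := t / (T + τ) with hθdef
  have hθ0 : 0 ≤ θ := div_nonneg ht0 hTτ.le
  have hθ1 : θ ≤ 1 := (div_le_one hTτ).2 ht1
  have hθt : (T + τ) * θ = t := by
    rw [hθdef]; field_simp [hTτ.ne']
  have hE : (0:ℝ) < Real.exp (-(T + τ) * lam) := Real.exp_pos _
  -- lower bound of the denominator
  set Dlow : ℝ := α ^ (1 - θ) * (τ * Real.exp (-(T + τ) * lam)) ^ θ with hDlow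
  have hDlowpos : 0 < Dlow :=
    mul_pos (Real.rpow_pos_of_pos hα _) (Real.rpow_pos_of_pos (mul_pos hτ hE) _)
  have hkey : Dlow ≤ α * (1 + τ * lam) + τ * Real.exp (-T * lam) := by
    have h1 : Dlow ≤ (1 - θ) * α + θ * (τ * Real.exp (-(T + τ) * lam)) :=
      Real.geom_mean_le_arith_mean2_weighted (by linarith) hθ0 hα.le
        (mul_pos hτ hE).le (by ring)
    have h2 : (1 - θ) * α ≤ α * (1 + τ * lam) := by
      have : (1 - θ) * α ≤ α := by nlinarith
      nlinarith [mul_nonneg (mul_nonneg hτ.le hlam) hα.le]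
    have h3 : θ * (τ * Real.exp (-(T + τ) * lam)) ≤ τ * Real.exp (-T * lam) := by
      have he : Real.exp (-(T + τ) * lam) ≤ Real.exp (-T * lam) :=
        Real.exp_le_exp.2 (by nlinarith)
      calc θ * (τ * Real.exp (-(T + τ) * lam)) ≤ 1 * (τ * Real.exp (-(T + τ) * lam)) := by
            apply mul_le_mul_of_nonneg_right hθ1 (mul_pos hτ hE).le
        _ = τ * Real.exp (-(T + τ) * lam) := one_mul _
        _ ≤ τ * Real.exp (-T * lam) := by
            exact mul_le_mul_of_nonneg_left he hτ.le
    linarith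
  have hDpos : 0 < α * (1 + τ * lam) + τ * Real.exp (-T * lam) :=
    lt_of_lt_of_le hDlowpos hkey
  -- the exact identity
  have hId : τ ^ 2 * Real.exp (-2 * t * lam) = (τ / α) ^ (2 * (1 - θ)) * Dlow ^ 2 := by
    rw [hDlow, mul_pow, ← Real.rpow_natCast (α ^ (1 - θ)) 2,
      ← Real.rpow_natCast ((τ * Real.exp (-(T + τ) * lam)) ^ θ) 2,
      ← Real.rpow_mul hα.le, ← Real.rpow_mul (mul_pos hτ hE).le,
      Real.div_rpow hτ.le hα.le,
      Real.mul_rpow hτ.le hE.le]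
    push_cast
    have h1 : (τ ^ (2 * (1 - θ)) / α ^ (2 * (1 - θ))) * (α ^ ((1 - θ) * 2) *
        (τ ^ (θ * 2) * Real.exp (-(T + τ) * lam) ^ (θ * 2))) =
        (τ ^ (2 * (1 - θ)) * τ ^ (θ * 2)) * Real.exp (-(T + τ) * lam) ^ (θ * 2) := by
      rw [mul_comm (2:ℝ) (1 - θ)]
      field_simp [(Real.rpow_pos_of_pos hα ((1 - θ) * 2)).ne']
    rw [h1, ← Real.rpow_add hτ, ← Real.exp_mul]
    have h2 : 2 * (1 - θ) + θ * 2 = 2 := by ring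
    have h3 : -(T + τ) * lam * (θ * 2) = -2 * t * lam := by
      rw [← hθt]; ring
    rw [h2, h3, Real.rpow_two]
  rw [div_le_iff₀ (by positivity), hId]
  have : Dlow ^ 2 ≤ (α * (1 + τ * lam) + τ * Real.exp (-T * lam)) ^ 2 :=
    pow_le_pow_left₀ hDlowpos.le hkey 2
  exact mul_le_mul_of_nonneg_left this (Real.rpow_nonneg (div_nonneg hτ.le hα.le) _)
end

section
/- Let T > 0, τ ≥ 0, α > 0, λ ≥ 0 and 0 ≤ t ≤ T + τ. Then α²(1+τλ)² e^{2(T-t)λ} / (α(1+τλ) + e^{-Tλ})² ≤ α^{2t/(T+τ)} · e^{2Tλ}. -/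
theorem stmt_4 (T τ α lam t : ℝ) (hT : 0 < T) (hτ : 0 ≤ τ) (hα : 0 < α)
    (hlam : 0 ≤ lam) (ht0 : 0 ≤ t) (ht1 : t ≤ T + τ) :
    α ^ 2 * (1 + τ * lam) ^ 2 * Real.exp (2 * (T - t) * lam) /
        (α * (1 + τ * lam) + Real.exp (-T * lam)) ^ 2 ≤
      α ^ (2 * t / (T + τ)) * Real.exp (2 * T * lam) := by
  have hTτ : 0 < T + τ := by linarith
  set s : ℝ := t / (T + τ) with hs
  have hs0 : 0 ≤ s := div_nonneg ht0 hTτ.le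
  have hs1 : s ≤ 1 := (div_le_one hTτ).mpr ht1
  have hst : s * (T + τ) = t := by rw [hs]; exact div_mul_cancel₀ t hTτ.ne'
  have htaul : 0 ≤ τ * lam := mul_nonneg hτ hlam
  have h1tl : (0:ℝ) < 1 + τ * lam := by linarith
  -- step 1: (1+τλ) e^{-(T+τ)λ} ≤ e^{-Tλ}
  have h1 : (1 + τ * lam) * Real.exp (-(T + τ) * lam) ≤ Real.exp (-T * lam) := by
    have h := Real.add_one_le_exp (τ * lam)
    have : (1 + τ * lam) * Real.exp (-(T + τ) * lam)
        ≤ Real.exp (τ * lam) * Real.exp (-(T + τ) * lam) := by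
      apply mul_le_mul_of_nonneg_right (by linarith) (Real.exp_pos _).le
    calc (1 + τ * lam) * Real.exp (-(T + τ) * lam)
        ≤ Real.exp (τ * lam) * Real.exp (-(T + τ) * lam) := this
      _ = Real.exp (-T * lam) := by rw [← Real.exp_add]; ring_nf
  -- step 2: weighted AM-GM : α^{1-s} * e^{-tλ} ≤ α + e^{-(T+τ)λ}
  have h2 : α ^ (1 - s) * Real.exp (-t * lam) ≤ α + Real.exp (-(T + τ) * lam) := by
    have hx : Real.exp (-t * lam) = (Real.exp (-(T + τ) * lam)) ^ s := by
      rw [← Real.exp_mul]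
      congr 1
      rw [← hst]; ring
    rw [hx]
    calc α ^ (1 - s) * Real.exp (-(T + τ) * lam) ^ s
        ≤ (1 - s) * α + s * Real.exp (-(T + τ) * lam) :=
          Real.geom_mean_le_arith_mean2_weighted (by linarith) hs0 hα.le
            (Real.exp_pos _).le (by ring)
      _ ≤ α + Real.exp (-(T + τ) * lam) := by
          nlinarith [hα.le, (Real.exp_pos (-(T + τ) * lam)).le]
  set D := α * (1 + τ * lam) + Real.exp (-T * lam) with hD
  have hDpos : 0 < D := by positivity
  have hLpos : 0 < (1 + τ * lam) * (α ^ (1 - s) * Real.exp (-t * lam)) := by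
    have : (0:ℝ) < α ^ (1 - s) := Real.rpow_pos_of_pos hα _
    positivity
  have hLD : (1 + τ * lam) * (α ^ (1 - s) * Real.exp (-t * lam)) ≤ D := by
    calc (1 + τ * lam) * (α ^ (1 - s) * Real.exp (-t * lam))
        ≤ (1 + τ * lam) * (α + Real.exp (-(T + τ) * lam)) := by
          apply mul_le_mul_of_nonneg_left h2 h1tl.le
      _ ≤ D := by rw [hD]; nlinarith
  rw [div_le_iff₀ (by positivity)]
  have e1 : (α ^ (1 - s)) ^ 2 = α ^ ((1 - s) * 2) := by
    rw [← Real.rpow_natCast (α ^ (1 - s)) 2, ← Real.rpow_mul hα.le]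
    norm_num
  have e2 : α ^ (2 * t / (T + τ)) * α ^ ((1 - s) * 2) = α ^ 2 := by
    rw [← Real.rpow_add hα]
    have h : 2 * t / (T + τ) + (1 - s) * 2 = ((2 : ℕ) : ℝ) := by
      rw [hs]; push_cast; field_simp; ring
    rw [h, Real.rpow_natCast]
  have e3 : Real.exp (2 * T * lam) * Real.exp (-t * lam) ^ 2
      = Real.exp (2 * (T - t) * lam) := by
    rw [sq, ← Real.exp_add, ← Real.exp_add]; ring_nf
  calc α ^ 2 * (1 + τ * lam) ^ 2 * Real.exp (2 * (T - t) * lam)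
      = α ^ (2 * t / (T + τ)) * Real.exp (2 * T * lam) *
        ((1 + τ * lam) * (α ^ (1 - s) * Real.exp (-t * lam))) ^ 2 := by
        rw [mul_pow, mul_pow, e1]
        rw [show α ^ (2 * t / (T + τ)) * Real.exp (2 * T * lam) *
            ((1 + τ * lam) ^ 2 * (α ^ ((1 - s) * 2) * Real.exp (-t * lam) ^ 2))
          = α ^ (2 * t / (T + τ)) * α ^ ((1 - s) * 2) * (1 + τ * lam) ^ 2 *
            (Real.exp (2 * T * lam) * Real.exp (-t * lam) ^ 2) from by ring, e2, e3]
    _ ≤ α ^ (2 * t / (T + τ)) * Real.exp (2 * T * lam) * D ^ 2 := by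
        apply mul_le_mul_of_nonneg_left _ (by positivity)
        exact pow_le_pow_left₀ hLpos.le hLD 2
end

section
/- Let T > 0, τ > 0, α > 0, λ ≥ 0 and 0 ≤ t ≤ T + τ. Then the squared difference (τ e^{-tλ}/(α(1+τλ) + τ e^{-Tλ}) − e^{(T−t)λ})² equals α²(1+τλ)² e^{2(T−t)λ}/(α(1+τλ) + τ e^{-Tλ})², and this is bounded above by (α/τ)^{2t/(T+τ)} · e^{2Tλ}. -/
theorem stmt_5 (T τ α lam t : ℝ) (hT : 0 < T) (hτ : 0 < τ) (hα : 0 < α)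
    (hlam : 0 ≤ lam) (ht0 : 0 ≤ t) (ht1 : t ≤ T + τ) :
    (τ * Real.exp (-t * lam) / (α * (1 + τ * lam) + τ * Real.exp (-T * lam)) -
          Real.exp ((T - t) * lam)) ^ 2 =
        α ^ 2 * (1 + τ * lam) ^ 2 * Real.exp (2 * (T - t) * lam) /
          (α * (1 + τ * lam) + τ * Real.exp (-T * lam)) ^ 2 ∧
      α ^ 2 * (1 + τ * lam) ^ 2 * Real.exp (2 * (T - t) * lam) /
          (α * (1 + τ * lam) + τ * Real.exp (-T * lam)) ^ 2 ≤
        (α / τ) ^ (2 * t / (T + τ)) * Real.exp (2 * T * lam) := by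
  have hE : 0 < Real.exp (-T * lam) := Real.exp_pos _
  have hone : (1:ℝ) ≤ 1 + τ * lam := by nlinarith
  have hD : 0 < α * (1 + τ * lam) + τ * Real.exp (-T * lam) := by nlinarith
  have h1 : Real.exp (-t * lam) = Real.exp ((T - t) * lam) * Real.exp (-T * lam) := by
    rw [← Real.exp_add]; ring_nf
  have h2 : Real.exp (2 * (T - t) * lam) = Real.exp ((T - t) * lam) ^ 2 := by
    rw [sq, ← Real.exp_add]; ring_nf
  constructor
  · rw [h1, h2]
    field_simp
    ring
  · set X := α * (1 + τ * lam) / (α * (1 + τ * lam) + τ * Real.exp (-T * lam)) with hXdef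
    have hXpos : 0 < X := by positivity
    have hX1 : X ≤ 1 := by
      rw [hXdef, div_le_one hD]; nlinarith
    have hXA : X ≤ α * (1 + τ * lam) * Real.exp (T * lam) / τ := by
      rw [hXdef, div_le_div_iff₀ hD hτ]
      have h3 : Real.exp (T * lam) * Real.exp (-T * lam) = 1 := by
        rw [← Real.exp_add]; ring_nf; exact Real.exp_zero
      have key : α * (1 + τ * lam) * Real.exp (T * lam) *
          (α * (1 + τ * lam) + τ * Real.exp (-T * lam)) - α * (1 + τ * lam) * τ
          = (α * (1 + τ * lam)) ^ 2 * Real.exp (T * lam) := by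
        linear_combination (α * (1 + τ * lam) * τ) * h3
      nlinarith [key, mul_nonneg (pow_nonneg (mul_nonneg hα.le (le_trans one_pos.le hone)) 2)
        (Real.exp_pos (T * lam)).le]
    set θ : ℝ := 2 * t / (T + τ) with hθdef
    have hθ0 : 0 ≤ θ := by positivity
    have hθ2 : θ ≤ 2 := by
      rw [hθdef, div_le_iff₀ (by linarith)]; linarith
    have hLHS : α ^ 2 * (1 + τ * lam) ^ 2 * Real.exp (2 * (T - t) * lam) /
        (α * (1 + τ * lam) + τ * Real.exp (-T * lam)) ^ 2
        = X ^ 2 * Real.exp (2 * (T - t) * lam) := by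
      rw [hXdef, div_pow]; ring
    rw [hLHS]
    have step1 : X ^ 2 ≤ X ^ θ := by
      calc X ^ 2 = X ^ (2:ℝ) := by rw [← Real.rpow_natCast X 2]; norm_num
      _ ≤ X ^ θ := Real.rpow_le_rpow_of_exponent_ge hXpos hX1 hθ2
    have step2 : X ^ θ ≤ (α * (1 + τ * lam) * Real.exp (T * lam) / τ) ^ θ :=
      Real.rpow_le_rpow (le_of_lt hXpos) hXA hθ0
    have hA : (α * (1 + τ * lam) * Real.exp (T * lam) / τ) ^ θ
        = (α / τ) ^ θ * ((1 + τ * lam) * Real.exp (T * lam)) ^ θ := by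
      rw [← Real.mul_rpow (by positivity) (by positivity)]
      ring_nf
    have hexp : (1 + τ * lam) * Real.exp (T * lam) ≤ Real.exp ((τ + T) * lam) := by
      have := Real.add_one_le_exp (τ * lam)
      calc (1 + τ * lam) * Real.exp (T * lam) ≤ Real.exp (τ * lam) * Real.exp (T * lam) := by
            nlinarith [Real.exp_pos (T * lam)]
      _ = Real.exp ((τ + T) * lam) := by rw [← Real.exp_add]; ring_nf
    have step3 : ((1 + τ * lam) * Real.exp (T * lam)) ^ θ
        ≤ Real.exp ((τ + T) * lam) ^ θ :=
      Real.rpow_le_rpow (by positivity) hexp hθ0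
    have step4 : Real.exp ((τ + T) * lam) ^ θ = Real.exp (2 * t * lam) := by
      rw [← Real.exp_mul]
      congr 1
      rw [hθdef]
      field_simp
      ring
    have hfin : Real.exp (2 * t * lam) * Real.exp (2 * (T - t) * lam)
        = Real.exp (2 * T * lam) := by
      rw [← Real.exp_add]; ring_nf
    calc X ^ 2 * Real.exp (2 * (T - t) * lam)
        ≤ X ^ θ * Real.exp (2 * (T - t) * lam) := by
          apply mul_le_mul_of_nonneg_right step1 (le_of_lt (Real.exp_pos _))
      _ ≤ (α * (1 + τ * lam) * Real.exp (T * lam) / τ) ^ θ * Real.exp (2 * (T - t) * lam) := by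
          apply mul_le_mul_of_nonneg_right step2 (le_of_lt (Real.exp_pos _))
      _ = (α / τ) ^ θ * (((1 + τ * lam) * Real.exp (T * lam)) ^ θ
            * Real.exp (2 * (T - t) * lam)) := by rw [hA]; ring
      _ ≤ (α / τ) ^ θ * (Real.exp (2 * t * lam) * Real.exp (2 * (T - t) * lam)) := by
          apply mul_le_mul_of_nonneg_left _ (by positivity)
          rw [← step4]
          apply mul_le_mul_of_nonneg_right step3 (le_of_lt (Real.exp_pos _))
      _ = (α / τ) ^ θ * Real.exp (2 * T * lam) := by rw [hfin]
end
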